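/- Suppose (Y_1,…,Y_K) are n×n complex matrices with rank(Ξ(Y_1,…,Y_K)) ≤ n² − n, and some Y_l has n distinct eigenvalues and is diagonalized as S⁻¹Y_lS with invertible S. Then S⁻¹Y_kS is diagonal for every k = 1,…,K. -/

import Mathlib

open Matrix Kronecker

/-- Column-stacking vectorization: `vecM X (j, i) = X i j`
(the pair `(j, i)` encodes position `(j-1)*n + i`). -/
def vecM {n : ℕ} (X : Matrix (Fin n) (Fin n) ℂ) : Fin n × Fin n → ℂ :=
  fun p => X p.2 p.1

/-- The Kronecker sum `I_n ⊗ X - Xᵀ ⊗ I_n`. -/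
def kronSum {n : ℕ} (X : Matrix (Fin n) (Fin n) ℂ) :
    Matrix (Fin n × Fin n) (Fin n × Fin n) ℂ :=
  (1 : Matrix (Fin n) (Fin n) ℂ) ⊗ₖ X - Xᵀ ⊗ₖ (1 : Matrix (Fin n) (Fin n) ℂ)

/-- `Ξ(X_1, …, X_K)`: the vertical stack of the `I_n ⊗ X_k - X_kᵀ ⊗ I_n`. -/
def XiM {n K : ℕ} (X : Fin K → Matrix (Fin n) (Fin n) ℂ) :
    Matrix (Fin K × (Fin n × Fin n)) (Fin n × Fin n) ℂ :=
  fun p q => kronSum (X p.1) p.2 q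

/-- Simultaneous diagonalizability of a tuple. -/
def SimDiag {n K : ℕ} (X : Fin K → Matrix (Fin n) (Fin n) ℂ) : Prop :=
  ∃ S : Matrix (Fin n) (Fin n) ℂ, IsUnit S ∧ ∀ k, (S⁻¹ * X k * S).IsDiag

/-- `X` has `n` distinct eigenvalues. -/
def HasDistinctEigenvalues {n : ℕ} (X : Matrix (Fin n) (Fin n) ℂ) : Prop :=
  ∃ μ : Fin n → ℂ, Function.Injective μ ∧
    ∀ i, Module.End.HasEigenvalue (Matrix.mulVecLin X) (μ i)

/-- Squared Frobenius norm. -/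
noncomputable def frobSq {m p : Type*} [Fintype m] [Fintype p] (X : Matrix m p ℂ) : ℝ :=
  ∑ i, ∑ j, ‖X i j‖ ^ 2

/-- Khatri–Rao (column-wise Kronecker) product. -/
def khatriRao {n : ℕ} (X Y : Matrix (Fin n) (Fin n) ℂ) :
    Matrix (Fin n × Fin n) (Fin n) ℂ :=
  fun p j => X p.1 j * Y p.2 j

/-- Inverse of vectorization. -/
def devecM {n : ℕ} (v : Fin n × Fin n → ℂ) : Matrix (Fin n) (Fin n) ℂ :=
  fun i j => v (j, i)

lemma vecM_devecM {n : ℕ} (v : Fin n × Fin n → ℂ) : vecM (devecM v) = v := by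
  funext ⟨a, b⟩; rfl

lemma vecM_eq_zero_iff {n : ℕ} {M : Matrix (Fin n) (Fin n) ℂ} :
    vecM M = 0 ↔ M = 0 := by
  constructor
  · intro h; funext i j; exact congrFun h (j, i)
  · intro h; funext ⟨a, b⟩; simp [h, vecM]

lemma kronSum_mulVec {n : ℕ} (X M : Matrix (Fin n) (Fin n) ℂ) :
    (kronSum X) *ᵥ (vecM M) = vecM (X * M - M * X) := by
  funext ⟨j, i⟩
  simp only [kronSum, vecM, mulVec, dotProduct, Matrix.sub_apply,
    kroneckerMap_apply, one_apply, transpose_apply, Fintype.sum_prod_type,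
    Matrix.mul_apply]
  simp only [sub_mul, Finset.sum_sub_distrib, ite_mul, mul_ite, one_mul, mul_one,
    zero_mul, mul_zero]
  congr 1
  · simp [Finset.sum_ite_eq, Finset.sum_ite_eq', mul_comm]
  · simp [Finset.sum_ite_eq, Finset.sum_ite_eq', mul_comm]

lemma kronSum_mulVec_eq_zero_iff {n : ℕ} (X M : Matrix (Fin n) (Fin n) ℂ) :
    (kronSum X) *ᵥ (vecM M) = 0 ↔ X * M = M * X := by
  rw [kronSum_mulVec, vecM_eq_zero_iff, sub_eq_zero]

lemma XiM_mulVec_apply {n K : ℕ} (Y : Fin K → Matrix (Fin n) (Fin n) ℂ)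
    (v : Fin n × Fin n → ℂ) (k : Fin K) (p : Fin n × Fin n) :
    ((XiM Y) *ᵥ v) (k, p) = ((kronSum (Y k)) *ᵥ v) p := rfl

lemma conj_mul_conj {n : ℕ} {S : Matrix (Fin n) (Fin n) ℂ}
    (hSinv : S * S⁻¹ = 1) (M N : Matrix (Fin n) (Fin n) ℂ) :
    (S⁻¹ * M * S) * (S⁻¹ * N * S) = S⁻¹ * (M * N) * S := by
  simp only [Matrix.mul_assoc]
  rw [← Matrix.mul_assoc S S⁻¹ (N * S), hSinv, Matrix.one_mul]

/-- A diagonal matrix with distinct diagonal entries: anything commuting with it is diagonal. -/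
lemma isDiag_of_commute_distinct_diag {n : ℕ} {D A : Matrix (Fin n) (Fin n) ℂ}
    (hD : D.IsDiag) (hd : Function.Injective (fun i => D i i))
    (h : A * D = D * A) : A.IsDiag := by
  intro i j hij
  have h1 : (A * D) i j = A i j * D j j := by
    rw [Matrix.mul_apply]
    rw [Finset.sum_eq_single j]
    · intro b _ hb; rw [hD hb, mul_zero]
    · simp
  have h2 : (D * A) i j = D i i * A i j := by
    rw [Matrix.mul_apply]
    rw [Finset.sum_eq_single i]
    · intro b _ hb; rw [hD (Ne.symm hb), zero_mul]
    · simp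
  have h3 : A i j * D j j = D i i * A i j := by rw [← h1, ← h2, h]
  have h4 : A i j * (D j j - D i i) = 0 := by ring_nf; linear_combination h3
  rcases mul_eq_zero.mp h4 with h | h
  · exact h
  · exact absurd (hd (by simpa [sub_eq_zero] using h : D j j = D i i)) (Ne.symm hij)

/-- Diagonal entries of a diagonalization of a matrix with n distinct eigenvalues are injective. -/
lemma diag_injective_of_distinct {n : ℕ} {B : Matrix (Fin n) (Fin n) ℂ}
    {S : Matrix (Fin n) (Fin n) ℂ} (hS : IsUnit S)
    (hB : HasDistinctEigenvalues B) (hdiag : (S⁻¹ * B * S).IsDiag) :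
    Function.Injective (fun i => (S⁻¹ * B * S) i i) := by
  set D := S⁻¹ * B * S with hD
  obtain ⟨μ, hμinj, hμ⟩ := hB
  have hSdet : IsUnit S.det := (Matrix.isUnit_iff_isUnit_det S).mp hS
  have hSinv : S * S⁻¹ = 1 := Matrix.mul_nonsing_inv S hSdet
  have hSinv' : S⁻¹ * S = 1 := Matrix.nonsing_inv_mul S hSdet
  -- every eigenvalue μ i is a diagonal entry of D
  have key : ∀ i : Fin n, ∃ j : Fin n, D j j = μ i := by
    intro i
    obtain ⟨v, hv⟩ := (hμ i).exists_hasEigenvector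
    have hv0 : v ≠ 0 := hv.right
    have hvEq : B *ᵥ v = μ i • v := hv.apply_eq_smul
    set w := S⁻¹ *ᵥ v with hw
    have hw0 : w ≠ 0 := by
      intro h
      apply hv0
      have : S *ᵥ w = v := by
        rw [hw, Matrix.mulVec_mulVec, hSinv, Matrix.one_mulVec]
      rw [← this, h, Matrix.mulVec_zero]
    have hDw : D *ᵥ w = μ i • w := by
      have h1 : D * S⁻¹ = S⁻¹ * B := by
        rw [hD, Matrix.mul_assoc (S⁻¹ * B), hSinv, Matrix.mul_one]
      rw [hw, Matrix.mulVec_mulVec, h1, ← Matrix.mulVec_mulVec, hvEq, Matrix.mulVec_smul]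
    obtain ⟨j, hj⟩ := Function.ne_iff.mp hw0
    refine ⟨j, ?_⟩
    have hj1 : (D *ᵥ w) j = D j j * w j := by
      rw [Matrix.mulVec, dotProduct, Finset.sum_eq_single j]
      · intro b _ hb; rw [hdiag (Ne.symm hb), zero_mul]
      · simp
    have hj2 : D j j * w j = μ i * w j := by
      rw [← hj1, hDw]; simp
    exact mul_right_cancel₀ hj hj2
  -- hence the diagonal entries are all distinct
  choose g hg using key
  have hginj : Function.Injective g := by
    intro a b hab
    exact hμinj (by rw [← hg a, ← hg b, hab])
  have hgsurj : Function.Surjective g := Finite.surjective_of_injective hginj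
  intro a b hab
  obtain ⟨a', ha'⟩ := hgsurj a
  obtain ⟨b', hb'⟩ := hgsurj b
  have : μ a' = μ b' := by
    rw [← hg a', ← hg b', ha', hb']; exact hab
  rw [← ha', ← hb', hμinj this]

theorem common_diagonalizer_of_low_rank {n K : ℕ}
    (Y : Fin K → Matrix (Fin n) (Fin n) ℂ)
    (hrank : (XiM Y).rank ≤ n ^ 2 - n)
    (l : Fin K) (hl : HasDistinctEigenvalues (Y l))
    (S : Matrix (Fin n) (Fin n) ℂ) (hS : IsUnit S)
    (hdiag : (S⁻¹ * Y l * S).IsDiag) :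
    ∀ k, (S⁻¹ * Y k * S).IsDiag := by
  set D := S⁻¹ * Y l * S with hD
  have hSdet : IsUnit S.det := (Matrix.isUnit_iff_isUnit_det S).mp hS
  have hSinv : S * S⁻¹ = 1 := Matrix.mul_nonsing_inv S hSdet
  have hSinv' : S⁻¹ * S = 1 := Matrix.nonsing_inv_mul S hSdet
  have hdinj : Function.Injective (fun i => D i i) :=
    diag_injective_of_distinct hS hl hdiag
  -- two kernels
  set E := LinearMap.ker (XiM Y).mulVecLin with hE
  set C := LinearMap.ker (kronSum (Y l)).mulVecLin with hC
  have hEC : E ≤ C := by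
    intro v hv
    have hv' : (XiM Y) *ᵥ v = 0 := hv
    show (kronSum (Y l)) *ᵥ v = 0
    funext p
    have := congrFun hv' (l, p)
    simpa [XiM_mulVec_apply] using this
  -- finrank C ≤ n via injection into diagonals
  have hCfin : Module.finrank ℂ C ≤ n := by
    classical
    let ψ : (Fin n × Fin n → ℂ) →ₗ[ℂ] (Fin n → ℂ) :=
      { toFun := fun v i => (S⁻¹ * devecM v * S) i i
        map_add' := by
          intro u v
          funext i
          have : devecM (u + v) = devecM u + devecM v := rfl
          simp [this, Matrix.mul_add, Matrix.add_mul]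
        map_smul' := by
          intro c v
          funext i
          have : devecM (c • v) = c • devecM v := rfl
          simp [this, Matrix.mul_smul, Matrix.smul_mul] }
    have hinj : Function.Injective (ψ.comp C.subtype) := by
      rw [← LinearMap.ker_eq_bot]
      rw [LinearMap.ker_eq_bot']
      rintro ⟨v, hv⟩ hψ
      have hv' : (kronSum (Y l)) *ᵥ v = 0 := hv
      rw [← vecM_devecM v, kronSum_mulVec_eq_zero_iff] at hv'
      -- A := S⁻¹ * devecM v * S commutes with D
      set A := S⁻¹ * devecM v * S with hA
      have hcomm : A * D = D * A := by
        rw [hA, hD, conj_mul_conj hSinv, conj_mul_conj hSinv, hv']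
      have hAdiag : A.IsDiag := isDiag_of_commute_distinct_diag hdiag hdinj hcomm
      have hψ0 : ∀ i, A i i = 0 := fun i => congrFun hψ i
      have hA0 : A = 0 := by
        funext i j
        by_cases hij : i = j
        · subst hij; exact hψ0 i
        · exact hAdiag hij
      have hdv : devecM v = 0 := by
        have : S * A * S⁻¹ = devecM v := by
          rw [hA, ← Matrix.mul_assoc S (S⁻¹ * devecM v) S,
            Matrix.mul_nonsing_inv_cancel_left S _ hSdet,
            Matrix.mul_assoc (devecM v) S S⁻¹, hSinv, Matrix.mul_one]
        rw [← this, hA0]; simp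
      apply Subtype.ext
      show v = 0
      rw [← vecM_devecM v, hdv]
      exact vecM_eq_zero_iff.mpr rfl
    calc Module.finrank ℂ C ≤ Module.finrank ℂ (Fin n → ℂ) :=
          LinearMap.finrank_le_finrank_of_injective hinj
      _ = n := by simp
  -- finrank E ≥ n by rank-nullity
  have hEfin : n ≤ Module.finrank ℂ E := by
    have hrn := LinearMap.finrank_range_add_finrank_ker (XiM Y).mulVecLin
    have hdom : Module.finrank ℂ (Fin n × Fin n → ℂ) = n ^ 2 := by
      simp [sq]
    rw [hdom] at hrn
    have hEeq : Module.finrank ℂ E = Module.finrank ℂ (LinearMap.ker (XiM Y).mulVecLin) := rfl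
    rw [hEeq]
    have hrank' : Module.finrank ℂ (LinearMap.range (XiM Y).mulVecLin) ≤ n ^ 2 - n := hrank
    have hn2 : n ≤ n ^ 2 := Nat.le_self_pow two_ne_zero n
    omega
  have hECeq : E = C := Submodule.eq_of_le_of_finrank_le hEC (hCfin.trans hEfin)
  -- vecM (Y l) ∈ C, hence ∈ E
  have hYlC : vecM (Y l) ∈ C := by
    show (kronSum (Y l)) *ᵥ vecM (Y l) = 0
    rw [kronSum_mulVec_eq_zero_iff]
  have hYlE : vecM (Y l) ∈ E := hECeq ▸ hYlC
  intro k
  have hk : (kronSum (Y k)) *ᵥ vecM (Y l) = 0 := by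
    have hv' : (XiM Y) *ᵥ vecM (Y l) = 0 := hYlE
    funext p
    have := congrFun hv' (k, p)
    simpa [XiM_mulVec_apply] using this
  rw [kronSum_mulVec_eq_zero_iff] at hk
  -- Y k commutes with Y l ⇒ S⁻¹ Y k S commutes with D
  set A := S⁻¹ * Y k * S with hA
  have hcomm : A * D = D * A := by
    rw [hA, hD, conj_mul_conj hSinv, conj_mul_conj hSinv, hk]
  exact isDiag_of_commute_distinct_diag hdiag hdinj hcomm
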